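/- Suppose t ≥ 2, and let I^- = I \ {α_t} (a non-empty finite set with max α_{t−1}). Then c_0(I) = −c_0(I^-), where c_0(I^-) is the constant coefficient in the expansion of N(I^-, n) in the binomial basis, defined analogously to c_0(I). -/

import Mathlib

open Finset

/-- Sequences of length `ℓ` (positions `1..ℓ`) with entries in `{1,…,n}`,
encoded as functions `ℕ → ℕ` vanishing outside `[1, ℓ]`. -/
def Seqs (ℓ n : ℕ) : Set (ℕ → ℕ) :=
  {v | (∀ i ∈ Finset.Icc 1 ℓ, v i ∈ Finset.Icc 1 n) ∧ ∀ i, i ∉ Finset.Icc 1 ℓ → v i = 0}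

/-- Descent set of a sequence of length `ℓ`:
`Des(v) = {i ∈ {1,…,ℓ-1} : v_i > v_{i+1}}`. -/
def Des (ℓ : ℕ) (v : ℕ → ℕ) : Set ℕ :=
  {i | 1 ≤ i ∧ i < ℓ ∧ v (i + 1) < v i}

/-- Number of occurrences of the value `j` among positions `1..ℓ` of `v`. -/
def mult (ℓ : ℕ) (v : ℕ → ℕ) (j : ℕ) : ℕ :=
  ((Finset.Icc 1 ℓ).filter fun i => v i = j).card

/-- `𝔡^m(I, n)`: the number of sequences of length `n*m`, in which each of `1,…,n`
appears exactly `m` times, whose descent set is `I`. -/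
noncomputable def dP (m : ℕ) (I : Finset ℕ) (n : ℕ) : ℕ :=
  Set.ncard {w ∈ Seqs (n * m) n |
    Des (n * m) w = ↑I ∧ ∀ j ∈ Finset.Icc 1 n, mult (n * m) w j = m}

/-- `N(I, n)`: the number of sequences `v = (v_1, …, v_{α_t})` with entries in `{1,…,n}`
such that `Des v = I \ {α_t}` and `v_{α_t} ≠ 1`. -/
noncomputable def Ncount (I : Finset ℕ) (n : ℕ) : ℕ :=
  Set.ncard {v ∈ Seqs (I.sup id) n |
    Des (I.sup id) v = ↑(I.erase (I.sup id)) ∧ v (I.sup id) ≠ 1}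

/-- `D^m(I, n)`: the number of sequences `v = (v_1, …, v_{α_t})` with entries in `{1,…,n}`
such that `Des v = I \ {α_t}` and each of `1,…,n` appears at most `m` times in `v`. -/
noncomputable def Dcount (m : ℕ) (I : Finset ℕ) (n : ℕ) : ℕ :=
  Set.ncard {v ∈ Seqs (I.sup id) n |
    Des (I.sup id) v = ↑(I.erase (I.sup id)) ∧ ∀ j ∈ Finset.Icc 1 n, mult (I.sup id) v j ≤ m}

/-- `b_i(I)`: the number of sequences `v = (v_1, …, v_{α_t})` with entries in `{1,…,i+1}`
such that `Des v = I \ {α_t}`, every number in `{2,…,i+1}` occurs in `v`, and `v_{α_t} ≠ 1`. -/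
noncomputable def bcoef (I : Finset ℕ) (i : ℕ) : ℕ :=
  Set.ncard {v ∈ Seqs (I.sup id) (i + 1) |
    Des (I.sup id) v = ↑(I.erase (I.sup id)) ∧
    (∀ l ∈ Finset.Icc 2 (i + 1), ∃ j ∈ Finset.Icc 1 (I.sup id), v j = l) ∧
    v (I.sup id) ≠ 1}

/-- `L(I)`: the length of the longest run of consecutive integers contained in `I`. -/
def longestRun (I : Finset ℕ) : ℕ :=
  I.sup fun a => ((Finset.Icc a (I.sup id)).filter fun b => Finset.Icc a b ⊆ I).card

/-- `alphaVal I k` is the `k`-th smallest element of `I` (`1`-indexed), with `alphaVal I 0 = 0`. -/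
def alphaVal (I : Finset ℕ) (k : ℕ) : ℕ :=
  if k = 0 then 0 else (I.sort (· ≤ ·)).getD (k - 1) 0

/-- For a composition `A = (a_1,…,a_s)` of `t = |I|`, `sigmaC I A i` is
`σ_{i+1} = β_{a_1+⋯+a_i+1} + ⋯ + β_{a_1+⋯+a_{i+1}}`, where `β` is the sequence of first
differences of `(0, α_1, …, α_t)`; by telescoping this equals
`α_{a_1+⋯+a_{i+1}} - α_{a_1+⋯+a_i}`. -/
def sigmaC (I : Finset ℕ) {t : ℕ} (A : Composition t) (i : ℕ) : ℕ :=
  alphaVal I (A.sizeUpTo (i + 1)) - alphaVal I (A.sizeUpTo i)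

/-- `C(A, I)` for a composition `A = (a_1,…,a_r)`: the number of sequences
`v = (v_1, …, v_{α_t})` with entries in `{1,…,r}` such that `Des v = I \ {α_t}`
and the number `j` appears exactly `a_j` times in `v`, for each `j ∈ {1,…,r}`. -/
noncomputable def Ccount (I : Finset ℕ) {N : ℕ} (A : Composition N) : ℕ :=
  Set.ncard {v ∈ Seqs (I.sup id) A.length |
    Des (I.sup id) v = ↑(I.erase (I.sup id)) ∧
    ∀ j ∈ Finset.Icc 1 A.length, mult (I.sup id) v j = A.blocks.getD (j - 1) 0}

/-- The generalized binomial coefficient `C(a, i) = a(a-1)⋯(a-i+1)/i!` for an integer `a`. -/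
def genChoose (a : ℤ) (i : ℕ) : ℚ :=
  (∏ j ∈ Finset.range i, ((a : ℚ) - (j : ℚ))) / (Nat.factorial i)

open scoped Classical

noncomputable def W (ℓ n : ℕ) : Finset (ℕ → ℕ) :=
  ((Finset.Icc 1 ℓ).pi fun _ => Finset.Icc 1 n).image
    fun f i => if h : i ∈ Finset.Icc 1 ℓ then f i h else 0

lemma mem_W {ℓ n : ℕ} {v : ℕ → ℕ} : v ∈ W ℓ n ↔ v ∈ Seqs ℓ n := by
  constructor
  · rintro hv
    simp only [W, mem_image, mem_pi] at hv
    obtain ⟨f, hf, rfl⟩ := hv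
    constructor
    · intro i hi; simp [hi, hf i hi]
    · intro i hi; simp [hi]
  · rintro ⟨h1, h2⟩
    simp only [W, mem_image, mem_pi]
    refine ⟨fun i _ => v i, fun i hi => h1 i hi, ?_⟩
    funext i
    by_cases hi : i ∈ Finset.Icc 1 ℓ
    · simp [hi]
    · simp [hi, h2 i hi]

lemma seqs_filter_eq (ℓ n : ℕ) (p : (ℕ → ℕ) → Prop) [DecidablePred p] :
    {v ∈ Seqs ℓ n | p v} = ↑((W ℓ n).filter p) := by
  ext v
  simp only [Set.mem_setOf_eq, Finset.coe_filter, Finset.mem_filter, mem_W]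

lemma ncard_seqs (ℓ n : ℕ) (p : (ℕ → ℕ) → Prop) [DecidablePred p] :
    Set.ncard {v ∈ Seqs ℓ n | p v} = ((W ℓ n).filter p).card := by
  rw [seqs_filter_eq, Set.ncard_coe_finset]

noncomputable section RankSec

def rank (S : Finset ℕ) (x : ℕ) : ℕ := (S.filter (· ≤ x)).card

lemma rank_mono (S : Finset ℕ) {x y : ℕ} (h : x ≤ y) : rank S x ≤ rank S y :=
  Finset.card_le_card (Finset.monotone_filter_right S fun a _ ha => le_trans ha h)

lemma rank_strict (S : Finset ℕ) {x y : ℕ} (h : x < y) (hy : y ∈ S) :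
    rank S x < rank S y := by
  apply Finset.card_lt_card
  refine ⟨Finset.monotone_filter_right S fun a _ ha => le_trans ha h.le, ?_⟩
  intro hsub
  have := hsub (Finset.mem_filter.2 ⟨hy, le_refl y⟩)
  simp only [Finset.mem_filter] at this
  omega

lemma rank_lt_iff {S : Finset ℕ} {x y : ℕ} (hx : x ∈ S) (hy : y ∈ S) :
    rank S x < rank S y ↔ x < y := by
  constructor
  · intro h
    by_contra hle
    exact absurd (rank_mono S (by omega : y ≤ x)) (by omega)
  · intro h; exact rank_strict S h hy

lemma rank_injOn {S : Finset ℕ} {x y : ℕ} (hx : x ∈ S) (hy : y ∈ S)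
    (h : rank S x = rank S y) : x = y := by
  rcases lt_trichotomy x y with h1 | h1 | h1
  · exact absurd ((rank_lt_iff hx hy).2 h1) (by omega)
  · exact h1
  · exact absurd ((rank_lt_iff hy hx).2 h1) (by omega)

lemma rank_mem_Icc {S : Finset ℕ} {x : ℕ} (hx : x ∈ S) :
    rank S x ∈ Finset.Icc 1 S.card := by
  rw [Finset.mem_Icc]
  constructor
  · have : x ∈ S.filter (· ≤ x) := Finset.mem_filter.2 ⟨hx, le_refl x⟩
    exact Finset.card_pos.2 ⟨x, this⟩
  · exact Finset.card_le_card (Finset.filter_subset _ _)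

lemma rank_image (S : Finset ℕ) : S.image (rank S) = Finset.Icc 1 S.card := by
  apply Finset.eq_of_subset_of_card_le
  · intro j hj
    obtain ⟨x, hx, rfl⟩ := Finset.mem_image.1 hj
    exact rank_mem_Icc hx
  · rw [Nat.card_Icc]
    simp only [Nat.add_sub_cancel]
    rw [Finset.card_image_of_injOn fun x hx y hy h => rank_injOn hx hy h]

def invRank (S : Finset ℕ) (j : ℕ) : ℕ :=
  if h : ∃ x ∈ S, rank S x = j then h.choose else 0

lemma invRank_spec {S : Finset ℕ} {j : ℕ} (hj : j ∈ Finset.Icc 1 S.card) :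
    invRank S j ∈ S ∧ rank S (invRank S j) = j := by
  have : j ∈ S.image (rank S) := by rw [rank_image]; exact hj
  obtain ⟨x, hx, hxj⟩ := Finset.mem_image.1 this
  have h : ∃ x ∈ S, rank S x = j := ⟨x, hx, hxj⟩
  rw [invRank, dif_pos h]
  exact ⟨h.choose_spec.1, h.choose_spec.2⟩

lemma invRank_rank {S : Finset ℕ} {x : ℕ} (hx : x ∈ S) : invRank S (rank S x) = x := by
  have h : ∃ y ∈ S, rank S y = rank S x := ⟨x, hx, rfl⟩
  rw [invRank, dif_pos h]
  exact rank_injOn h.choose_spec.1 hx h.choose_spec.2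

lemma invRank_lt_iff {S : Finset ℕ} {a b : ℕ} (ha : a ∈ Finset.Icc 1 S.card)
    (hb : b ∈ Finset.Icc 1 S.card) : invRank S a < invRank S b ↔ a < b := by
  rw [← (invRank_spec ha).2, ← (invRank_spec hb).2,
    rank_lt_iff (invRank_spec ha).1 (invRank_spec hb).1]
  rw [(invRank_spec ha).2, (invRank_spec hb).2]

end RankSec

noncomputable def Eset (J : Finset ℕ) (ℓ i : ℕ) : Finset (ℕ → ℕ) :=
  (W ℓ i).filter fun v => Des ℓ v = ↑J ∧ (Finset.Icc 1 ℓ).image v = Finset.Icc 1 i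

lemma fiber_card (J S : Finset ℕ) (ℓ n : ℕ) (hS : S ⊆ Finset.Icc 1 n) :
    ((W ℓ n).filter fun v => Des ℓ v = ↑J ∧ (Finset.Icc 1 ℓ).image v = S).card
      = (Eset J ℓ S.card).card := by
  apply Finset.card_bij'
    (i := fun v _ => fun p => if p ∈ Finset.Icc 1 ℓ then rank S (v p) else 0)
    (j := fun w _ => fun p => if p ∈ Finset.Icc 1 ℓ then invRank S (w p) else 0)
  · -- forward maps into Eset
    intro v hv
    rw [Finset.mem_filter] at hv
    obtain ⟨hW, hDes, hImg⟩ := hv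
    have hvS : ∀ p ∈ Finset.Icc 1 ℓ, v p ∈ S := fun p hp =>
      hImg ▸ Finset.mem_image_of_mem v hp
    rw [Eset, Finset.mem_filter]
    refine ⟨?_, ?_, ?_⟩
    · rw [mem_W]
      constructor
      · intro p hp; simp only [hp, if_true]; exact rank_mem_Icc (hvS p hp)
      · intro p hp; simp [hp]
    · rw [← hDes]
      ext q
      simp only [Des, Set.mem_setOf_eq]
      by_cases hq : 1 ≤ q ∧ q < ℓ
      · have h1 : q ∈ Finset.Icc 1 ℓ := by simp [Finset.mem_Icc]; omega
        have h2 : q + 1 ∈ Finset.Icc 1 ℓ := by simp [Finset.mem_Icc]; omega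
        simp only [h1, h2, if_true]
        rw [rank_lt_iff (hvS _ h2) (hvS _ h1)]
      · constructor <;> (intro h; exact absurd ⟨h.1, h.2.1⟩ hq)
    · rw [Finset.image_congr (g := fun p => rank S (v p))
        (fun p hp => by simp [Finset.mem_coe.1 hp]),
        show (fun p => rank S (v p)) = rank S ∘ v from rfl,
        ← Finset.image_image, hImg, rank_image]
  · -- backward maps into fiber
    intro w hw
    rw [Eset, Finset.mem_filter] at hw
    obtain ⟨hW, hDes, hImg⟩ := hw
    have hwI : ∀ p ∈ Finset.Icc 1 ℓ, w p ∈ Finset.Icc 1 S.card := fun p hp =>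
      hImg ▸ Finset.mem_image_of_mem w hp
    rw [Finset.mem_filter]
    refine ⟨?_, ?_, ?_⟩
    · rw [mem_W]
      constructor
      · intro p hp; simp only [hp, if_true]
        exact hS (invRank_spec (hwI p hp)).1
      · intro p hp; simp [hp]
    · rw [← hDes]
      ext q
      simp only [Des, Set.mem_setOf_eq]
      by_cases hq : 1 ≤ q ∧ q < ℓ
      · have h1 : q ∈ Finset.Icc 1 ℓ := by simp [Finset.mem_Icc]; omega
        have h2 : q + 1 ∈ Finset.Icc 1 ℓ := by simp [Finset.mem_Icc]; omega
        simp only [h1, h2, if_true]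
        rw [invRank_lt_iff (hwI _ h2) (hwI _ h1)]
      · constructor <;> (intro h; exact absurd ⟨h.1, h.2.1⟩ hq)
    · rw [Finset.image_congr (g := fun p => invRank S (w p))
        (fun p hp => by simp [Finset.mem_coe.1 hp]),
        show (fun p => invRank S (w p)) = invRank S ∘ w from rfl,
        ← Finset.image_image, hImg]
      apply Finset.eq_of_subset_of_card_le
      · intro x hx
        obtain ⟨j, hj, rfl⟩ := Finset.mem_image.1 hx
        exact (invRank_spec hj).1
      · rw [Finset.card_image_of_injOn]
        · simp [Nat.card_Icc]
        · intro a ha b hb hab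
          have := (invRank_lt_iff ha hb)
          have := (invRank_lt_iff hb ha)
          omega
  · -- left inverse
    intro v hv
    rw [Finset.mem_filter] at hv
    obtain ⟨hW, hDes, hImg⟩ := hv
    have hvS : ∀ p ∈ Finset.Icc 1 ℓ, v p ∈ S := fun p hp =>
      hImg ▸ Finset.mem_image_of_mem v hp
    funext p
    by_cases hp : p ∈ Finset.Icc 1 ℓ
    · simp only [hp, if_true]
      exact invRank_rank (hvS p hp)
    · simp only [hp, if_false]
      exact ((mem_W.1 hW).2 p hp).symm
  · -- right inverse
    intro w hw
    rw [Eset, Finset.mem_filter] at hw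
    obtain ⟨hW, hDes, hImg⟩ := hw
    have hwI : ∀ p ∈ Finset.Icc 1 ℓ, w p ∈ Finset.Icc 1 S.card := fun p hp =>
      hImg ▸ Finset.mem_image_of_mem w hp
    funext p
    by_cases hp : p ∈ Finset.Icc 1 ℓ
    · simp only [hp, if_true]
      exact (invRank_spec (hwI p hp)).2
    · simp only [hp, if_false]
      exact ((mem_W.1 hW).2 p hp).symm

lemma P_card_eq (J : Finset ℕ) (ℓ k : ℕ) :
    ((W ℓ k).filter fun v => Des ℓ v = ↑J).card
      = ∑ i ∈ Finset.range (k + 1), Nat.choose k i * (Eset J ℓ i).card := by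
  rw [Finset.card_eq_sum_card_fiberwise
    (f := fun v => (Finset.Icc 1 ℓ).image v) (t := (Finset.Icc 1 k).powerset) ?_]
  · have : ∀ S ∈ (Finset.Icc 1 k).powerset,
        ((((W ℓ k).filter fun v => Des ℓ v = ↑J).filter
            fun v => (Finset.Icc 1 ℓ).image v = S)).card = (Eset J ℓ S.card).card := by
      intro S hS
      rw [Finset.filter_filter]
      exact fiber_card J S ℓ k (Finset.mem_powerset.1 hS)
    rw [Finset.sum_congr rfl this]
    have := Finset.sum_powerset_apply_card (fun i => (Eset J ℓ i).card)
      (x := Finset.Icc 1 k)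
    rw [this]
    have hk : (Finset.Icc 1 k).card = k := by simp [Nat.card_Icc]
    rw [hk]
    exact Finset.sum_congr rfl fun i _ => smul_eq_mul ..
  · intro v hv
    rw [Finset.mem_coe, Finset.mem_filter] at hv
    rw [Finset.mem_coe, Finset.mem_powerset]
    intro x hx
    obtain ⟨p, hp, rfl⟩ := Finset.mem_image.1 hx
    exact (mem_W.1 hv.1).1 p hp

lemma Eset_empty (J : Finset ℕ) (ℓ i : ℕ) (h : ℓ < i) : Eset J ℓ i = ∅ := by
  rw [Finset.eq_empty_iff_forall_notMem]
  intro v hv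
  rw [Eset, Finset.mem_filter] at hv
  have h1 : ((Finset.Icc 1 ℓ).image v).card ≤ ℓ := by
    calc ((Finset.Icc 1 ℓ).image v).card ≤ (Finset.Icc 1 ℓ).card := Finset.card_image_le
    _ = ℓ := by simp [Nat.card_Icc]
  rw [hv.2.2] at h1
  simp [Nat.card_Icc] at h1
  omega

lemma altsum_zero (K i : ℕ) (hi : i < K) :
    ∑ k ∈ Finset.range (K + 1), (-1 : ℚ) ^ k * (Nat.choose K k) * (Nat.choose k i) = 0 := by
  rw [← Finset.sum_subset (s₁ := Finset.Ico i (K + 1))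
      (by intro x hx; rw [Finset.mem_Ico] at hx; rw [Finset.mem_range]; omega)
      (by
        intro x hx hx'
        rw [Finset.mem_range] at hx
        rw [Finset.mem_Ico] at hx'
        have : x < i := by omega
        rw [Nat.choose_eq_zero_of_lt this]
        ring)]
  rw [Finset.sum_Ico_eq_sum_range]
  have hKi : K + 1 - i = (K - i) + 1 := by omega
  rw [hKi]
  have hcongr : ∀ m ∈ Finset.range ((K - i) + 1),
      (-1 : ℚ) ^ (i + m) * (Nat.choose K (i + m)) * (Nat.choose (i + m) i)
        = ((-1 : ℚ) ^ i * (Nat.choose K i)) * ((-1 : ℚ) ^ m * (Nat.choose (K - i) m)) := by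
    intro m hm
    rw [Finset.mem_range] at hm
    have h1 : i + m ≤ K := by omega
    have h2 : i ≤ i + m := by omega
    have := Nat.choose_mul (n := K) h2
    have h3 : i + m - i = m := by omega
    rw [h3] at this
    have h4 : (K.choose (i + m) : ℚ) * ((i + m).choose i)
        = (K.choose i : ℚ) * ((K - i).choose m) := by exact_mod_cast this
    linear_combination ((-1 : ℚ) ^ i * (-1 : ℚ) ^ m) * h4
  rw [Finset.sum_congr rfl hcongr, ← Finset.mul_sum]
  have : ∑ m ∈ Finset.range ((K - i) + 1), (-1 : ℚ) ^ m * (Nat.choose (K - i) m) = 0 := by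
    have hz := Int.alternating_sum_range_choose_of_ne (n := K - i) (by omega)
    have : ((∑ m ∈ Finset.range (K - i + 1), ((-1) ^ m * (K - i).choose m : ℤ) : ℤ) : ℚ) = 0 := by
      rw [hz]; norm_num
    push_cast at this
    convert this using 2
  rw [this, mul_zero]

lemma tail_ones {M M' n : ℕ} {J : Finset ℕ} {v : ℕ → ℕ}
    (hJ : ∀ x ∈ J, 1 ≤ x ∧ x ≤ M') (hM : M' < M)
    (hW : v ∈ W M n) (hDes : Des M v = ↑J) (hvM : v M = 1) :
    ∀ i, M' < i → i ≤ M → v i = 1 := by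
  have key : ∀ d i, M' < i → i ≤ M → M - i = d → v i = 1 := by
    intro d
    induction d with
    | zero =>
      intro i h1 h2 h3
      have hiM : i = M := by omega
      subst hiM
      exact hvM
    | succ d ih =>
      intro i h1 h2 h3
      have hi1 : v (i + 1) = 1 := ih (i + 1) (by omega) (by omega) (by omega)
      have hnd : i ∉ Des M v := by
        rw [hDes, Finset.mem_coe]
        intro hm
        exact absurd (hJ i hm).2 (by omega)
      simp only [Des, Set.mem_setOf_eq, not_and, not_lt] at hnd
      have hle : v i ≤ v (i + 1) := hnd (by omega) (by omega)
      have : v i ∈ Finset.Icc 1 n := (mem_W.1 hW).1 i (by simp [Finset.mem_Icc]; omega)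
      rw [Finset.mem_Icc] at this
      omega
  intro i h1 h2
  exact key (M - i) i h1 h2 rfl

lemma ext_card {M M' n : ℕ} {J : Finset ℕ}
    (hJ : ∀ x ∈ J, 1 ≤ x ∧ x ≤ M') (hM'J : M' ∈ J) (hM : M' < M) (hn : 1 ≤ n) :
    ((W M n).filter fun v => Des M v = ↑J ∧ v M = 1).card
      = ((W M' n).filter fun v => Des M' v = ↑(J.erase M') ∧ v M' ≠ 1).card := by
  have hM'1 : 1 ≤ M' := (hJ M' hM'J).1
  apply Finset.card_bij'
    (i := fun v _ => fun p => if p ∈ Finset.Icc 1 M' then v p else 0)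
    (j := fun u _ => fun p => if p ∈ Finset.Icc 1 M then (if p ≤ M' then u p else 1) else 0)
  · -- left inverse
    intro v hv
    rw [Finset.mem_filter] at hv
    obtain ⟨hW, hDes, hvM⟩ := hv
    have htail := tail_ones hJ hM hW hDes hvM
    funext p
    by_cases hp : p ∈ Finset.Icc 1 M
    · simp only [hp, if_true]
      by_cases hpM' : p ≤ M'
      · have : p ∈ Finset.Icc 1 M' := by rw [Finset.mem_Icc] at hp ⊢; omega
        simp [this, hpM']
      · simp only [hpM', if_false]
        rw [Finset.mem_Icc] at hp
        exact (htail p (by omega) (by omega)).symm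
    · simp only [hp, if_false]
      exact ((mem_W.1 hW).2 p hp).symm
  · -- right inverse
    intro u hu
    rw [Finset.mem_filter] at hu
    obtain ⟨hW, _, _⟩ := hu
    funext p
    by_cases hp : p ∈ Finset.Icc 1 M'
    · have h1 : p ∈ Finset.Icc 1 M := by rw [Finset.mem_Icc] at hp ⊢; omega
      have h2 : p ≤ M' := (Finset.mem_Icc.1 hp).2
      simp [hp, h1, h2]
    · simp only [hp, if_false]
      exact ((mem_W.1 hW).2 p hp).symm
  · -- forward membership
    intro v hv
    rw [Finset.mem_filter] at hv
    obtain ⟨hW, hDes, hvM⟩ := hv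
    have htail := tail_ones hJ hM hW hDes hvM
    have hvM' : 1 < v M' := by
      have hdes : M' ∈ Des M v := by rw [hDes, Finset.mem_coe]; exact hM'J
      obtain ⟨_, _, hlt⟩ := hdes
      have : v (M' + 1) = 1 := htail (M' + 1) (by omega) (by omega)
      omega
    rw [Finset.mem_filter]
    refine ⟨?_, ?_, ?_⟩
    · rw [mem_W]
      constructor
      · intro p hp
        simp only [hp, if_true]
        exact (mem_W.1 hW).1 p (by rw [Finset.mem_Icc] at hp ⊢; omega)
      · intro p hp; simp [hp]
    · ext q
      simp only [Des, Set.mem_setOf_eq, Finset.mem_coe, Finset.mem_erase]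
      by_cases hq : 1 ≤ q ∧ q < M'
      · have h1 : q ∈ Finset.Icc 1 M' := by rw [Finset.mem_Icc]; omega
        have h2 : q + 1 ∈ Finset.Icc 1 M' := by rw [Finset.mem_Icc]; omega
        simp only [h1, h2, if_true]
        have hqdes : q ∈ Des M v ↔ q ∈ J := by rw [hDes]; exact Iff.rfl
        simp only [Des, Set.mem_setOf_eq] at hqdes
        constructor
        · rintro ⟨_, _, hlt⟩
          exact ⟨by omega, (hqdes.1 ⟨by omega, by omega, hlt⟩)⟩
        · rintro ⟨hne, hqJ⟩
          exact ⟨by omega, by omega, (hqdes.2 hqJ).2.2⟩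
      · constructor
        · rintro ⟨a, b, _⟩; omega
        · rintro ⟨hne, hqJ⟩
          have := hJ q hqJ
          omega
    · have : M' ∈ Finset.Icc 1 M' := by rw [Finset.mem_Icc]; omega
      simp only [this, if_true]
      omega
  · -- backward membership
    intro u hu
    rw [Finset.mem_filter] at hu
    obtain ⟨hW, hDes, huM'⟩ := hu
    have huM'1 : 1 ≤ u M' := by
      have := (mem_W.1 hW).1 M' (by rw [Finset.mem_Icc]; omega)
      rw [Finset.mem_Icc] at this; exact this.1
    rw [Finset.mem_filter]
    refine ⟨?_, ?_, ?_⟩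
    · rw [mem_W]
      constructor
      · intro p hp
        simp only [hp, if_true]
        by_cases hpM' : p ≤ M'
        · simp only [hpM', if_true]
          exact (mem_W.1 hW).1 p (by rw [Finset.mem_Icc] at hp ⊢; omega)
        · simp only [hpM', if_false, Finset.mem_Icc]; omega
      · intro p hp; simp [hp]
    · ext q
      simp only [Des, Set.mem_setOf_eq, Finset.mem_coe]
      by_cases hq : 1 ≤ q ∧ q < M
      · have h1 : q ∈ Finset.Icc 1 M := by rw [Finset.mem_Icc]; omega
        have h2 : q + 1 ∈ Finset.Icc 1 M := by rw [Finset.mem_Icc]; omega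
        simp only [h1, h2, if_true]
        rcases lt_trichotomy q M' with hc | hc | hc
        · have hq1 : q + 1 ≤ M' := by omega
          simp only [hc.le, hq1, if_true]
          have hqdes : q ∈ Des M' u ↔ q ∈ J.erase M' := by rw [hDes]; exact Iff.rfl
          simp only [Des, Set.mem_setOf_eq, Finset.mem_erase] at hqdes
          constructor
          · rintro ⟨_, _, hlt⟩
            exact (hqdes.1 ⟨by omega, by omega, hlt⟩).2
          · intro hqJ
            exact ⟨by omega, by omega, (hqdes.2 ⟨by omega, hqJ⟩).2.2⟩
        · subst hc
          have hq1 : ¬ (q + 1 ≤ q) := by omega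
          simp only [le_refl, if_true, hq1, if_false]
          constructor
          · intro _; exact hM'J
          · intro _; exact ⟨by omega, by omega, by omega⟩
        · have hq0 : ¬ (q ≤ M') := by omega
          have hq1 : ¬ (q + 1 ≤ M') := by omega
          simp only [hq0, hq1, if_false]
          constructor
          · rintro ⟨_, _, hlt⟩; omega
          · intro hqJ
            exact absurd (hJ q hqJ).2 (by omega)
      · constructor
        · rintro ⟨a, b, _⟩; omega
        · intro hqJ
          have := hJ q hqJ
          omega
    · have h1 : M ∈ Finset.Icc 1 M := by rw [Finset.mem_Icc]; omega
      have h2 : ¬ (M ≤ M') := by omega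
      simp [h1, h2]

lemma split_card {M M' n : ℕ} {J : Finset ℕ}
    (hJ : ∀ x ∈ J, 1 ≤ x ∧ x ≤ M') (hM'J : M' ∈ J) (hM : M' < M) (hn : 1 ≤ n) :
    ((W M n).filter fun v => Des M v = ↑J).card
      = ((W M n).filter fun v => Des M v = ↑J ∧ v M ≠ 1).card
        + ((W M' n).filter fun v => Des M' v = ↑(J.erase M') ∧ v M' ≠ 1).card := by
  have hM'1 : 1 ≤ M' := (hJ M' hM'J).1
  have hsplit : ((W M n).filter fun v => Des M v = ↑J).card
      = ((W M n).filter fun v => Des M v = ↑J ∧ v M ≠ 1).card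
        + ((W M n).filter fun v => Des M v = ↑J ∧ v M = 1).card := by
    have h := Finset.card_filter_add_card_filter_not
      (s := (W M n).filter fun v => Des M v = ↑J) (p := fun v => v M ≠ 1)
    simp only [not_not] at h
    rw [Finset.filter_filter, Finset.filter_filter] at h
    exact h.symm
  rw [hsplit]
  congr 1
  exact ext_card hJ hM'J hM hn

lemma W_zero_empty (M : ℕ) (hM : 1 ≤ M) : W M 0 = ∅ := by
  rw [Finset.eq_empty_iff_forall_notMem]
  intro v hv
  have := (mem_W.1 hv).1 1 (by rw [Finset.mem_Icc]; omega)
  simp at this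

lemma alt_P_zero (J : Finset ℕ) (M : ℕ) :
    ∑ k ∈ Finset.range (M + 2), (-1 : ℚ) ^ k * ((M + 1).choose k)
      * (((W M k).filter fun v => Des M v = ↑J).card : ℚ) = 0 := by
  have h1 : ∀ k ∈ Finset.range (M + 2),
      (-1 : ℚ) ^ k * ((M + 1).choose k) * (((W M k).filter fun v => Des M v = ↑J).card : ℚ)
        = ∑ i ∈ Finset.range (M + 2),
            (-1 : ℚ) ^ k * ((M + 1).choose k) * ((k.choose i : ℚ) * ((Eset J M i).card : ℚ)) := by
    intro k hk
    rw [← Finset.mul_sum]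
    congr 1
    have h2 : (((W M k).filter fun v => Des M v = ↑J).card : ℚ)
        = ∑ i ∈ Finset.range (k + 1), (k.choose i : ℚ) * ((Eset J M i).card : ℚ) := by
      rw [P_card_eq]
      push_cast
      rfl
    rw [h2]
    apply Finset.sum_subset
    · intro x hx
      rw [Finset.mem_range] at hx ⊢
      rw [Finset.mem_range] at hk
      omega
    · intro x hx hx'
      rw [Finset.mem_range] at hx
      rw [Finset.mem_range] at hx'
      rw [Nat.choose_eq_zero_of_lt (by omega)]
      norm_num
  rw [Finset.sum_congr rfl h1, Finset.sum_comm]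
  apply Finset.sum_eq_zero
  intro i hi
  rw [Finset.mem_range] at hi
  by_cases hiM : i ≤ M
  · have : ∀ k ∈ Finset.range (M + 2),
        (-1 : ℚ) ^ k * ((M + 1).choose k) * ((k.choose i : ℚ) * ((Eset J M i).card : ℚ))
          = ((-1 : ℚ) ^ k * ((M + 1).choose k) * (k.choose i : ℚ)) * ((Eset J M i).card : ℚ) := by
      intro k _; ring
    rw [Finset.sum_congr rfl this, ← Finset.sum_mul]
    have : M + 2 = (M + 1) + 1 := rfl
    rw [this, altsum_zero (M + 1) i (by omega), zero_mul]
  · have hie : i = M + 1 := by omega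
    apply Finset.sum_eq_zero
    intro k _
    rw [hie, Eset_empty J M (M + 1) (by omega)]
    norm_num

lemma coeff_identity (c : ℕ → ℚ) (g : ℕ → ℕ) (M r : ℕ) (hr : r ≤ M)
    (hg : ∀ k : ℕ, 1 ≤ k → (g k : ℚ) = ∑ i ∈ Finset.range (r + 1), c i * (k.choose i : ℚ)) :
    c 0 + ∑ k ∈ Finset.Ico 1 (M + 2), (-1 : ℚ) ^ k * ((M + 1).choose k) * (g k : ℚ) = 0 := by
  have hT : ∑ k ∈ Finset.range (M + 2), (-1 : ℚ) ^ k * ((M + 1).choose k)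
      * (∑ i ∈ Finset.range (r + 1), c i * (k.choose i : ℚ)) = 0 := by
    have h1 : ∀ k ∈ Finset.range (M + 2),
        (-1 : ℚ) ^ k * ((M + 1).choose k) * (∑ i ∈ Finset.range (r + 1), c i * (k.choose i : ℚ))
          = ∑ i ∈ Finset.range (r + 1),
              ((-1 : ℚ) ^ k * ((M + 1).choose k) * (k.choose i : ℚ)) * c i := by
      intro k _
      rw [Finset.mul_sum]
      apply Finset.sum_congr rfl
      intro i _
      ring
    rw [Finset.sum_congr rfl h1, Finset.sum_comm]
    apply Finset.sum_eq_zero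
    intro i hi
    rw [Finset.mem_range] at hi
    have : ∀ k ∈ Finset.range (M + 2),
        ((-1 : ℚ) ^ k * ((M + 1).choose k) * (k.choose i : ℚ)) * c i
          = ((-1 : ℚ) ^ k * ((M + 1).choose k) * (k.choose i : ℚ)) * c i := fun _ _ => rfl
    rw [← Finset.sum_mul]
    have h2 : M + 2 = (M + 1) + 1 := rfl
    rw [h2, altsum_zero (M + 1) i (by omega), zero_mul]
  have hsplit : ∑ k ∈ Finset.range (M + 2), (-1 : ℚ) ^ k * ((M + 1).choose k)
      * (∑ i ∈ Finset.range (r + 1), c i * (k.choose i : ℚ))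
      = (∑ i ∈ Finset.range (r + 1), c i * ((Nat.choose 0 i : ℕ) : ℚ))
        + ∑ k ∈ Finset.Ico 1 (M + 2), (-1 : ℚ) ^ k * ((M + 1).choose k)
            * (∑ i ∈ Finset.range (r + 1), c i * (k.choose i : ℚ)) := by
    rw [Finset.range_eq_Ico, Finset.sum_eq_sum_Ico_succ_bot (by omega)]
    norm_num
  have h0 : ∑ i ∈ Finset.range (r + 1), c i * ((Nat.choose 0 i : ℕ) : ℚ) = c 0 := by
    rw [Finset.sum_eq_single 0]
    · norm_num
    · intro i _ hi
      rw [Nat.choose_eq_zero_of_lt (by omega)]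
      norm_num
    · intro h; exact absurd (Finset.mem_range.2 (by omega)) h
  have hgsum : ∑ k ∈ Finset.Ico 1 (M + 2), (-1 : ℚ) ^ k * ((M + 1).choose k)
      * (∑ i ∈ Finset.range (r + 1), c i * (k.choose i : ℚ))
      = ∑ k ∈ Finset.Ico 1 (M + 2), (-1 : ℚ) ^ k * ((M + 1).choose k) * (g k : ℚ) := by
    apply Finset.sum_congr rfl
    intro k hk
    rw [Finset.mem_Ico] at hk
    rw [hg k hk.1]
  rw [hsplit, h0, hgsum] at hT
  linarith


/-- if `t ≥ 2` and `I⁻ = I \ {α_t}`, and `c`, `c'` are the coefficients of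
`N(I,n)` resp. `N(I⁻,n)` in the binomial basis `(C(n,i))_i`, then `c_0(I) = -c_0(I⁻)`. -/
theorem stmt_19 (I : Finset ℕ) (hI : 2 ≤ I.card) (hIpos : ∀ x ∈ I, 1 ≤ x)
    (c c' : ℕ → ℚ)
    (hc : ∀ n : ℕ, 1 ≤ n →
      (Ncount I n : ℚ) = ∑ i ∈ Finset.range (I.sup id + 1), c i * (n.choose i : ℚ))
    (hc' : ∀ n : ℕ, 1 ≤ n →
      (Ncount (I.erase (I.sup id)) n : ℚ) =
        ∑ i ∈ Finset.range ((I.erase (I.sup id)).sup id + 1), c' i * (n.choose i : ℚ)) :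
    c 0 = - c' 0 := by
  have hne : I.Nonempty := Finset.card_pos.1 (by omega)
  obtain ⟨b, hbI, hbsup⟩ := Finset.exists_mem_eq_sup I hne id
  have hMI : I.sup id ∈ I := by rw [hbsup]; exact hbI
  have hImne : (I.erase (I.sup id)).Nonempty := Finset.card_pos.1 (by
    rw [Finset.card_erase_of_mem hMI]; omega)
  obtain ⟨b', hb'I, hb'sup⟩ := Finset.exists_mem_eq_sup _ hImne id
  have hM'Im : (I.erase (I.sup id)).sup id ∈ I.erase (I.sup id) := by
    rw [hb'sup]; exact hb'I
  set M := I.sup id with hMdef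
  set Im := I.erase M with hImdef
  set M' := Im.sup id with hM'def
  have hM'le : M' ≤ M := by
    have := Finset.le_sup (f := id) (Finset.mem_of_mem_erase hM'Im)
    simpa using this
  have hM'ne : M' ≠ M := by
    intro h
    have h2 := hM'Im
    rw [h] at h2
    exact Finset.notMem_erase M I h2
  have hM'ltM : M' < M := lt_of_le_of_ne hM'le hM'ne
  have hM'1 : 1 ≤ M' := hIpos M' (Finset.mem_of_mem_erase hM'Im)
  have hJ : ∀ x ∈ Im, 1 ≤ x ∧ x ≤ M' := fun x hx =>
    ⟨hIpos x (Finset.mem_of_mem_erase hx), by simpa using Finset.le_sup (f := id) hx⟩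
  have hNk : ∀ k : ℕ, 1 ≤ k → (Ncount I k) + (Ncount Im k)
      = ((W M k).filter fun v => Des M v = ↑Im).card := by
    intro k hk
    have h1 : Ncount I k = _ := ncard_seqs M k fun v => Des M v = ↑Im ∧ v M ≠ 1
    have h2 : Ncount Im k = _ :=
      ncard_seqs M' k fun v => Des M' v = ↑(Im.erase M') ∧ v M' ≠ 1
    rw [h1, h2]
    exact (split_card (J := Im) hJ hM'Im hM'ltM hk).symm
  have hA := coeff_identity c (fun k => Ncount I k) M M le_rfl hc
  have hB := coeff_identity c' (fun k => Ncount Im k) M M' hM'le hc'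
  have hP := alt_P_zero Im M
  have hP0 : (((W M 0).filter fun v => Des M v = ↑Im).card : ℚ) = 0 := by
    rw [W_zero_empty M (by omega)]
    simp
  have hPIco : ∑ k ∈ Finset.Ico 1 (M + 2), (-1 : ℚ) ^ k * ((M + 1).choose k)
      * (((W M k).filter fun v => Des M v = ↑Im).card : ℚ) = 0 := by
    rw [Finset.range_eq_Ico, Finset.sum_eq_sum_Ico_succ_bot (by omega)] at hP
    rw [hP0] at hP
    simpa using hP
  have hsum : ∑ k ∈ Finset.Ico 1 (M + 2), (-1 : ℚ) ^ k * ((M + 1).choose k)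
        * ((Ncount I k : ℚ))
      + ∑ k ∈ Finset.Ico 1 (M + 2), (-1 : ℚ) ^ k * ((M + 1).choose k)
        * ((Ncount Im k : ℚ)) = 0 := by
    rw [← Finset.sum_add_distrib]
    have : ∀ k ∈ Finset.Ico 1 (M + 2),
        (-1 : ℚ) ^ k * ((M + 1).choose k) * ((Ncount I k : ℚ))
          + (-1 : ℚ) ^ k * ((M + 1).choose k) * ((Ncount Im k : ℚ))
        = (-1 : ℚ) ^ k * ((M + 1).choose k)
            * (((W M k).filter fun v => Des M v = ↑Im).card : ℚ) := by
      intro k hk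
      rw [Finset.mem_Ico] at hk
      have := hNk k hk.1
      have hcast : (Ncount I k : ℚ) + (Ncount Im k : ℚ)
          = (((W M k).filter fun v => Des M v = ↑Im).card : ℚ) := by exact_mod_cast this
      rw [← mul_add, hcast]
    rw [Finset.sum_congr rfl this]
    exact hPIco
  linarith
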